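/- The map θ : Σ(P) → M is continuous and satisfies f(θ(q)) = θ(σ(q)) for all q ∈ Σ(P); that is, θ ∘ σ = f ∘ θ, so θ is a semiconjugacy from the shift σ on Σ(P) to f. -/

import Mathlib

open Set Filter Metric Topology

variable {M : Type*} [MetricSpace M] [CompactSpace M]

/-- `f` is expansive with expansivity constant `ρ`: if two orbits stay `ρ`-close for all
integer times, the points coincide. -/
def IsExpansiveWith (f : Equiv.Perm M) (ρ : ℝ) : Prop :=
  ∀ x y : M, (∀ n : ℤ, dist ((f ^ n) x) ((f ^ n) y) ≤ ρ) → x = y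

/-- The stable set `W^s(x)`. -/
def stableSet (f : Equiv.Perm M) (x : M) : Set M :=
  {y : M | Tendsto (fun n : ℤ => dist ((f ^ n) x) ((f ^ n) y)) atTop (𝓝 0)}

/-- The unstable set `W^u(x)`. -/
def unstableSet (f : Equiv.Perm M) (x : M) : Set M :=
  {y : M | Tendsto (fun n : ℤ => dist ((f ^ n) x) ((f ^ n) y)) atBot (𝓝 0)}

/-- The `ε`-stable set `W^s_ε(x)`. -/
def epsStable (f : Equiv.Perm M) (ε : ℝ) (x : M) : Set M :=
  {y : M | ∀ n : ℤ, 0 ≤ n → dist ((f ^ n) x) ((f ^ n) y) ≤ ε}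

/-- The `ε`-unstable set `W^u_ε(x)`. -/
def epsUnstable (f : Equiv.Perm M) (ε : ℝ) (x : M) : Set M :=
  {y : M | ∀ n : ℤ, n ≤ 0 → dist ((f ^ n) x) ((f ^ n) y) ≤ ε}

/-- Shadowing property: every `δ`-pseudo-orbit is `ε`-shadowed by a true orbit. -/
def HasShadowing (f : Equiv.Perm M) : Prop :=
  ∀ ε : ℝ, 0 < ε → ∃ δ : ℝ, 0 < δ ∧ ∀ y : ℤ → M,
    (∀ n : ℤ, dist (f (y n)) (y (n + 1)) < δ) →
      ∃ z : M, ∀ n : ℤ, dist ((f ^ n) z) (y n) ≤ ε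

/-- A rectangle: a nonempty set of diameter `< δ` closed under the bracket operation. -/
def IsRectangle (δ : ℝ) (br : M → M → M) (R : Set M) : Prop :=
  R.Nonempty ∧ Metric.diam R < δ ∧ ∀ x ∈ R, ∀ y ∈ R, br x y ∈ R

/-- Stable border `∂^s R`: points of `R` that are not interior points of
`W^u(x,R) = W^u_ε(x) ∩ R` in the subspace topology of `W^u_ε(x)`. -/
def stableBorder (f : Equiv.Perm M) (ε : ℝ) (R : Set M) : Set M :=
  {x : M | x ∈ R ∧ ¬ ∃ U : Set M, IsOpen U ∧ x ∈ U ∧ U ∩ epsUnstable f ε x ⊆ R}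

/-- Unstable border `∂^u R`: points of `R` that are not interior points of
`W^s(x,R) = W^s_ε(x) ∩ R` in the subspace topology of `W^s_ε(x)`. -/
def unstableBorder (f : Equiv.Perm M) (ε : ℝ) (R : Set M) : Set M :=
  {x : M | x ∈ R ∧ ¬ ∃ U : Set M, IsOpen U ∧ x ∈ U ∧ U ∩ epsStable f ε x ⊆ R}

/-- A Markov partition: a finite family of proper rectangles covering `M`, with pairwise
disjoint interiors, satisfying the Markov inclusions for the invariant fibers. -/
def IsMarkovPartition (f : Equiv.Perm M) (ε δ : ℝ) (br : M → M → M) {m : ℕ}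
    (R : Fin m → Set M) : Prop :=
  (∀ i, IsRectangle δ br (R i)) ∧
  (∀ i, R i = closure (interior (R i))) ∧
  (⋃ i, R i) = Set.univ ∧
  (∀ i j, i ≠ j → interior (R i) ∩ interior (R j) = ∅) ∧
  ∀ i j, ∀ x ∈ interior (R i) ∩ ⇑f ⁻¹' interior (R j),
    ⇑f '' (epsStable f ε x ∩ R i) ⊆ epsStable f ε (f x) ∩ R j ∧
    epsUnstable f ε (f x) ∩ R j ⊆ ⇑f '' (epsUnstable f ε x ∩ R i)

lemma perm_zpow_continuous {M : Type*} [TopologicalSpace M] (f : Equiv.Perm M)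
    (hf : Continuous ⇑f) (hf' : Continuous ⇑f.symm) (n : ℤ) : Continuous ⇑(f ^ n) := by
  induction n using Int.induction_on with
  | zero => simpa using continuous_id
  | succ k ih =>
      have h : ⇑(f ^ ((k : ℤ) + 1)) = ⇑(f ^ (k : ℤ)) ∘ ⇑f := by
        ext x; rw [zpow_add_one]; rfl
      rw [h]; exact ih.comp hf
  | pred k ih =>
      have h : ⇑(f ^ (-(k : ℤ) - 1)) = ⇑(f ^ (-(k : ℤ))) ∘ ⇑f.symm := by
        ext x; rw [zpow_sub_one]; rfl
      rw [h]; exact ih.comp hf'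

lemma unif_exp (f : Equiv.Perm M) (hf : Continuous ⇑f) (hf' : Continuous ⇑f.symm)
    (ρ : ℝ) (hexp : IsExpansiveWith f ρ) (ε : ℝ) (hε : 0 < ε) :
    ∃ N : ℕ, ∀ x y : M, (∀ n : ℤ, |n| ≤ (N : ℤ) → dist ((f ^ n) x) ((f ^ n) y) ≤ ρ) →
      dist x y < ε := by
  set Z : ℕ → Set (M × M) := fun N =>
    {p : M × M | ε ≤ dist p.1 p.2 ∧
      ∀ n : ℤ, |n| ≤ (N : ℤ) → dist ((f ^ n) p.1) ((f ^ n) p.2) ≤ ρ} with hZ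
  have hZc : ∀ N, IsClosed (Z N) := by
    intro N
    have : Z N = {p : M × M | ε ≤ dist p.1 p.2} ∩
        ⋂ n ∈ {n : ℤ | |n| ≤ (N : ℤ)}, {p : M × M | dist ((f ^ n) p.1) ((f ^ n) p.2) ≤ ρ} := by
      ext p
      simp [hZ, Set.mem_iInter, and_comm]
    rw [this]
    refine IsClosed.inter ?_ (isClosed_biInter fun n _ => ?_)
    · exact isClosed_le continuous_const (continuous_fst.dist continuous_snd)
    · exact isClosed_le
        (((perm_zpow_continuous f hf hf' n).comp continuous_fst).dist
          ((perm_zpow_continuous f hf hf' n).comp continuous_snd)) continuous_const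
  have hdir : Directed (· ⊇ ·) Z := by
    intro a b
    refine ⟨max a b, fun p hp => ⟨hp.1, fun n hn => hp.2 n ?_⟩,
      fun p hp => ⟨hp.1, fun n hn => hp.2 n ?_⟩⟩
    · exact hn.trans (by exact_mod_cast le_max_left a b)
    · exact hn.trans (by exact_mod_cast le_max_right a b)
  have hint : (univ ∩ ⋂ N, Z N) = ∅ := by
    rw [univ_inter, eq_empty_iff_forall_notMem]
    intro p hp
    rw [mem_iInter] at hp
    have hall : ∀ n : ℤ, dist ((f ^ n) p.1) ((f ^ n) p.2) ≤ ρ := by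
      intro n
      exact (hp n.natAbs).2 n (le_of_eq (Int.abs_eq_natAbs n))
    have := hexp p.1 p.2 hall
    have h0 := (hp 0).1
    rw [this] at h0
    simp at h0
    exact absurd h0 (not_le.mpr hε)
  obtain ⟨N, hN⟩ := isCompact_univ.elim_directed_family_closed Z hZc hint hdir
  refine ⟨N, fun x y h => ?_⟩
  by_contra hc
  push_neg at hc
  have : (x, y) ∈ Z N := ⟨hc, h⟩
  rw [eq_empty_iff_forall_notMem] at hN
  exact hN (x, y) ⟨mem_univ _, this⟩

/-- The map `θ : Σ(P) → M` (given by its defining shadowing property) is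
continuous on `Σ(P)` (with the product topology on `ℤ → M`, which induces on `Σ(P)` the
product of the discrete topologies on the finite set `P`) and satisfies
`f(θ(q)) = θ(σ(q))` for all `q ∈ Σ(P)`. -/
theorem stmt_14 (f : Equiv.Perm M) (hf : Continuous ⇑f) (hf' : Continuous ⇑f.symm)
    (ρ : ℝ) (hρ : 0 < ρ) (hexp : IsExpansiveWith f ρ)
    (β α γ : ℝ) (hβ0 : 0 < β) (hβ : β < ρ / 2) (hα0 : 0 < α)
    (hshad : ∀ y : ℤ → M, (∀ n : ℤ, dist (f (y n)) (y (n + 1)) < α) →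
      ∃ z : M, ∀ n : ℤ, dist ((f ^ n) z) (y n) ≤ β)
    (hγ0 : 0 < γ) (hγβ : γ < β) (hγα : γ < α / 2)
    (hγ : ∀ x y : M, dist x y < γ → dist (f x) (f y) < α / 2)
    {m : ℕ} (p : Fin m → M) (hP : ∀ x : M, ∃ i : Fin m, dist x (p i) < γ)
    (θ : (ℤ → M) → M)
    (hθ : ∀ q : ℤ → M, (∀ n : ℤ, ∃ i : Fin m, q n = p i) →
      (∀ n : ℤ, dist (f (q n)) (q (n + 1)) < α) →
      ∀ n : ℤ, dist ((f ^ n) (θ q)) (q n) ≤ β) :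
    ContinuousOn θ {q : ℤ → M | (∀ n : ℤ, ∃ i : Fin m, q n = p i) ∧
      ∀ n : ℤ, dist (f (q n)) (q (n + 1)) < α} ∧
    ∀ q : ℤ → M, (∀ n : ℤ, ∃ i : Fin m, q n = p i) →
      (∀ n : ℤ, dist (f (q n)) (q (n + 1)) < α) →
      f (θ q) = θ (fun n => q (n + 1)) := by
  have h2β : 2 * β < ρ := by linarith
  set S : Set (ℤ → M) := {q : ℤ → M | (∀ n : ℤ, ∃ i : Fin m, q n = p i) ∧
      ∀ n : ℤ, dist (f (q n)) (q (n + 1)) < α} with hS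
  constructor
  · -- continuity
    intro q hq
    rw [ContinuousWithinAt, Metric.tendsto_nhds]
    intro ε hε
    obtain ⟨N, hN⟩ := unif_exp f hf hf' ρ hexp ε hε
    have hc : (0 : ℝ) < ρ - 2 * β := by linarith
    have hev : ∀ᶠ q' in 𝓝 q, ∀ n ∈ Finset.Icc (-(N : ℤ)) N, dist (q' n) (q n) < ρ - 2 * β := by
      rw [eventually_all_finset]
      intro n _
      have : Tendsto (fun q' : ℤ → M => q' n) (𝓝 q) (𝓝 (q n)) :=
        (continuous_apply n).tendsto q
      exact Metric.tendsto_nhds.1 this (ρ - 2 * β) hc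
    filter_upwards [hev.filter_mono nhdsWithin_le_nhds, eventually_mem_nhdsWithin]
      with q' h1 h2
    apply hN
    intro n hn
    have hnIcc : n ∈ Finset.Icc (-(N : ℤ)) N := by
      rw [Finset.mem_Icc]; exact abs_le.mp hn
    have hq'θ := hθ q' h2.1 h2.2 n
    have hqθ := hθ q hq.1 hq.2 n
    calc dist ((f ^ n) (θ q')) ((f ^ n) (θ q))
        ≤ dist ((f ^ n) (θ q')) (q' n) + dist (q' n) (q n) + dist (q n) ((f ^ n) (θ q)) :=
          dist_triangle4 _ _ _ _
      _ ≤ β + (ρ - 2 * β) + β := by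
          have := h1 n hnIcc
          have h3 := dist_comm (q n) ((f ^ n) (θ q)) ▸ hqθ
          rw [dist_comm (q n)]
          linarith
      _ = ρ := by ring
  · -- semiconjugacy
    intro q hqP hqα
    set q' : ℤ → M := fun n => q (n + 1) with hq'
    have hq'P : ∀ n : ℤ, ∃ i : Fin m, q' n = p i := fun n => hqP (n + 1)
    have hq'α : ∀ n : ℤ, dist (f (q' n)) (q' (n + 1)) < α := by
      intro n
      have := hqα (n + 1)
      simpa [hq'] using this
    have h1 := hθ q' hq'P hq'α
    have h2 : ∀ n : ℤ, dist ((f ^ n) (f (θ q))) (q (n + 1)) ≤ β := by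
      intro n
      have key : (f ^ n) (f (θ q)) = (f ^ (n + 1)) (θ q) := by
        rw [zpow_add_one]; rfl
      rw [key]
      exact hθ q hqP hqα (n + 1)
    refine hexp (f (θ q)) (θ q') fun n => ?_
    calc dist ((f ^ n) (f (θ q))) ((f ^ n) (θ q'))
        ≤ dist ((f ^ n) (f (θ q))) (q (n + 1)) + dist (q (n + 1)) ((f ^ n) (θ q')) :=
          dist_triangle _ _ _
      _ ≤ β + β := by
          have h3 := h1 n
          rw [dist_comm (q (n + 1))]
          exact add_le_add (h2 n) h3
      _ ≤ ρ := by linarith
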